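/- Under the joint law of (X, Y₁, …, Y_K) described in the context, the expected one-sided distortion of the select-max estimator equals E[X − Ŷ] = D / (K − (K−1)·λ·D). -/

import Mathlib

open MeasureTheory

/-- The one-sided exponential distribution `Exp(r)`, with density `r·e^{−r x}` on `x ≥ 0`. -/
noncomputable def expMeasure (r : ℝ) : Measure ℝ :=
  volume.withDensity fun x => if 0 ≤ x then ENNReal.ofReal (r * Real.exp (-r * x)) else 0

/-- The forward test channel `κ(x)` of the one-sided exponential source: an atom of mass
`e^{−δx}` at `0` plus the density `y ↦ δ·e^{−δ(x−y)}` on the interval `(0, x]`. -/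
noncomputable def expChannel (δ : ℝ) (x : ℝ) : Measure ℝ :=
  (ENNReal.ofReal (Real.exp (-δ * x))) • Measure.dirac 0 +
    volume.withDensity
      ((Set.Ioc (0 : ℝ) x).indicator fun y => ENNReal.ofReal (δ * Real.exp (-δ * (x - y))))

/-- The joint law of `(X, Y₁, …, Y_K)`: the composition of `Exp(λ)` (the law of `X`) with the
`K`-fold product kernel `x ↦ κ(x)^{⊗K}`, so that `Y₁, …, Y_K` are conditionally i.i.d. given `X`
with conditional law `κ(X)`. -/
noncomputable def jointLaw (lam δ : ℝ) (K : ℕ) : Measure (ℝ × (Fin K → ℝ)) :=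
  (expMeasure lam).bind fun x =>
    (Measure.pi fun _ : Fin K => expChannel δ x).map fun ys => (x, ys)

section Aux

open Real Set
open scoped Classical

instance expChannel.instIsFiniteMeasure (δ x : ℝ) : IsFiniteMeasure (expChannel δ x) := by
  refine ⟨?_⟩
  rw [expChannel, Measure.add_apply, Measure.smul_apply, smul_eq_mul]
  refine ENNReal.add_lt_top.2 ⟨?_, ?_⟩
  · exact ENNReal.mul_lt_top ENNReal.ofReal_lt_top (measure_lt_top _ _)
  · rw [withDensity_apply _ MeasurableSet.univ, Measure.restrict_univ,
      lintegral_indicator measurableSet_Ioc]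
    calc ∫⁻ y in Set.Ioc 0 x, ENNReal.ofReal (δ * Real.exp (-δ * (x - y)))
        ≤ ∫⁻ _ in Set.Ioc 0 x, ENNReal.ofReal (|δ| * Real.exp (|δ| * |x|)) := by
          refine setLIntegral_mono' measurableSet_Ioc fun y hy => ?_
          refine ENNReal.ofReal_le_ofReal ?_
          have h1 : δ * Real.exp (-δ * (x - y)) ≤ |δ| * Real.exp (-δ * (x - y)) :=
            mul_le_mul_of_nonneg_right (le_abs_self δ) (Real.exp_nonneg _)
          refine h1.trans (mul_le_mul_of_nonneg_left (Real.exp_le_exp.2 ?_) (abs_nonneg δ))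
          calc -δ * (x - y) ≤ |(-δ) * (x - y)| := le_abs_self _
            _ = |δ| * |x - y| := by rw [abs_mul, abs_neg]
            _ ≤ |δ| * |x| := by
                refine mul_le_mul_of_nonneg_left ?_ (abs_nonneg δ)
                rw [abs_of_nonneg (by linarith [hy.1, hy.2] : (0:ℝ) ≤ x - y)]
                have hx : 0 < x := lt_of_lt_of_le hy.1 hy.2
                rw [abs_of_pos hx]; linarith [hy.1]
      _ = ENNReal.ofReal (|δ| * Real.exp (|δ| * |x|)) * volume (Set.Ioc 0 x) :=
          setLIntegral_const _ _
      _ < ⊤ := ENNReal.mul_lt_top ENNReal.ofReal_lt_top (by simp [Real.volume_Ioc])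

lemma integral_exp_chan (δ x a b : ℝ) (hab : a ≤ b) :
    ∫ y in Set.Ioc a b, δ * Real.exp (-δ * (x - y)) =
      Real.exp (-δ * (x - b)) - Real.exp (-δ * (x - a)) := by
  rw [← intervalIntegral.integral_of_le hab]
  have h : ∀ y ∈ Set.uIcc a b, HasDerivAt (fun y => Real.exp (-δ * (x - y)))
      (δ * Real.exp (-δ * (x - y))) y := by
    intro y _
    have h1 : HasDerivAt (fun y : ℝ => -δ * (x - y)) δ y := by
      simpa using ((hasDerivAt_id y).const_sub x).const_mul (-δ)
    simpa [mul_comm] using h1.exp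
  exact intervalIntegral.integral_eq_sub_of_hasDerivAt h
    ((by fun_prop : Continuous fun y : ℝ => δ * Real.exp (-δ * (x - y))).intervalIntegrable a b)

lemma expChannel_apply (δ x : ℝ) {s : Set ℝ} (hs : MeasurableSet s) :
    expChannel δ x s = (if (0:ℝ) ∈ s then ENNReal.ofReal (Real.exp (-δ * x)) else 0)
      + ∫⁻ y in s ∩ Set.Ioc 0 x, ENNReal.ofReal (δ * Real.exp (-δ * (x - y))) := by
  rw [expChannel, Measure.add_apply, Measure.smul_apply, Measure.dirac_apply' _ hs,
    withDensity_apply _ hs]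
  congr 1
  · rw [Set.indicator_apply]; split <;> simp
  · rw [← lintegral_indicator (hs.inter measurableSet_Ioc),
      ← lintegral_indicator hs]
    apply lintegral_congr
    intro y
    by_cases h1 : y ∈ s <;> by_cases h2 : y ∈ Set.Ioc 0 x <;>
      simp [Set.indicator_apply, h1, h2]

lemma lint_exp_chan (δ x a b : ℝ) (hδ : 0 ≤ δ) (hab : a ≤ b) :
    ∫⁻ y in Set.Ioc a b, ENNReal.ofReal (δ * Real.exp (-δ * (x - y)))
      = ENNReal.ofReal (Real.exp (-δ * (x - b)) - Real.exp (-δ * (x - a))) := by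
  rw [← ofReal_integral_eq_lintegral_ofReal]
  · rw [integral_exp_chan δ x a b hab]
  · exact ((by fun_prop : Continuous fun y : ℝ => δ * Real.exp (-δ * (x - y))).continuousOn.integrableOn_compact
      isCompact_Icc).mono_set Set.Ioc_subset_Icc_self
  · exact Filter.Eventually.of_forall fun y => mul_nonneg hδ (Real.exp_nonneg _)

lemma expChannel_Iio_nonpos (δ x c : ℝ) (hc : c ≤ 0) : expChannel δ x (Set.Iio c) = 0 := by
  rw [expChannel_apply δ x measurableSet_Iio]
  have h1 : (0:ℝ) ∉ Set.Iio c := by simp [not_lt.2 hc]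
  have h2 : Set.Iio c ∩ Set.Ioc 0 x = ∅ := by
    ext y; simp only [Set.mem_inter_iff, Set.mem_Iio, Set.mem_Ioc, Set.mem_empty_iff_false,
      iff_false]
    rintro ⟨h, h', _⟩; linarith
  simp [h1, h2]

lemma expChannel_Iio (δ x c : ℝ) (hδ : 0 ≤ δ) (h0 : 0 < c) (hcx : c ≤ x) :
    expChannel δ x (Set.Iio c) = ENNReal.ofReal (Real.exp (-δ * (x - c))) := by
  rw [expChannel_apply δ x measurableSet_Iio]
  have h2 : Set.Iio c ∩ Set.Ioc 0 x = Set.Ioo 0 c := by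
    ext y; simp only [Set.mem_inter_iff, Set.mem_Iio, Set.mem_Ioc, Set.mem_Ioo]
    constructor
    · rintro ⟨h, h', _⟩; exact ⟨h', h⟩
    · rintro ⟨h, h'⟩; exact ⟨h', h, by linarith⟩
  rw [h2, if_pos (show (0:ℝ) ∈ Set.Iio c from h0)]
  have h3 : (volume : Measure ℝ).restrict (Set.Ioo 0 c) = volume.restrict (Set.Ioc 0 c) := by
    rw [Measure.restrict_congr_set Ioo_ae_eq_Ioc]
  rw [h3, lint_exp_chan δ x 0 c hδ h0.le, sub_zero,
    ← ENNReal.ofReal_add (Real.exp_nonneg _)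
      (sub_nonneg.2 (Real.exp_le_exp.2 (by nlinarith)))]
  congr 1
  ring_nf

lemma expChannel_of_superset (δ x : ℝ) (hδ : 0 ≤ δ) (hx : 0 ≤ x) {s : Set ℝ}
    (hs : MeasurableSet s) (h0 : (0:ℝ) ∈ s) (hsub : Set.Ioc 0 x ⊆ s) :
    expChannel δ x s = 1 := by
  rw [expChannel_apply δ x hs, if_pos h0, Set.inter_eq_right.2 hsub,
    lint_exp_chan δ x 0 x hδ hx, sub_self, ← ENNReal.ofReal_add (Real.exp_nonneg _)
      (sub_nonneg.2 (Real.exp_le_exp.2 (by nlinarith)))]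
  norm_num

lemma expChannel_univ (δ x : ℝ) (hδ : 0 ≤ δ) (hx : 0 ≤ x) : expChannel δ x Set.univ = 1 :=
  expChannel_of_superset δ x hδ hx MeasurableSet.univ trivial (Set.subset_univ _)

lemma expChannel_Icc (δ x : ℝ) (hδ : 0 ≤ δ) (hx : 0 ≤ x) : expChannel δ x (Set.Icc 0 x) = 1 :=
  expChannel_of_superset δ x hδ hx measurableSet_Icc (by simp [hx])
    (fun y hy => ⟨hy.1.le, hy.2⟩)

lemma measurable_expChannel (δ : ℝ) :
    Measurable fun x : ℝ => expChannel δ (max x 0) := by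
  apply Measure.measurable_of_measurable_coe
  intro s hs
  simp_rw [expChannel_apply δ _ hs]
  apply Measurable.add
  · split
    · fun_prop
    · exact measurable_const
  · have h : ∀ x : ℝ, (∫⁻ y in s ∩ Set.Ioc 0 (max x 0),
        ENNReal.ofReal (δ * Real.exp (-δ * (max x 0 - y))))
        = ∫⁻ y, ({p : ℝ × ℝ | p.2 ∈ s ∧ 0 < p.2 ∧ p.2 ≤ max p.1 0}.indicator
            (fun p => ENNReal.ofReal (δ * Real.exp (-δ * (max p.1 0 - p.2)))) (x, y)) := by
      intro x
      rw [← lintegral_indicator (hs.inter measurableSet_Ioc)]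
      apply lintegral_congr
      intro y
      by_cases h : y ∈ s ∩ Set.Ioc 0 (max x 0)
      · rw [Set.indicator_of_mem h, Set.indicator_of_mem]
        exact ⟨h.1, h.2.1, h.2.2⟩
      · rw [Set.indicator_of_notMem h, Set.indicator_of_notMem]
        intro hc
        exact h ⟨hc.1, hc.2.1, hc.2.2⟩
    simp_rw [h]
    apply Measurable.lintegral_prod_right'
    apply Measurable.indicator
    · fun_prop
    · apply MeasurableSet.inter
      · exact measurable_snd hs
      · exact (measurableSet_lt measurable_const measurable_snd).inter
          (measurableSet_le measurable_snd (measurable_fst.max measurable_const))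

lemma measurable_pi_expChannel (δ : ℝ) (hδ : 0 ≤ δ) (K : ℕ) :
    Measurable fun x : ℝ => Measure.pi fun _ : Fin K => expChannel δ (max x 0) := by
  apply Measure.measurable_of_measurable_coe
  intro s hs
  have hprob : ∀ x : ℝ,
      IsProbabilityMeasure (Measure.pi fun _ : Fin K => expChannel δ (max x 0)) := by
    intro x
    haveI : IsProbabilityMeasure (expChannel δ (max x 0)) :=
      ⟨expChannel_univ δ _ hδ (le_max_right _ _)⟩
    infer_instance
  refine MeasurableSpace.induction_on_inter
    (C := fun t _ => Measurable fun x : ℝ => (Measure.pi fun _ : Fin K => expChannel δ (max x 0)) t)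
    generateFrom_pi.symm isPiSystem_pi (by simp) ?_ ?_ ?_ s hs
  · rintro t ⟨t', ht', rfl⟩
    simp_rw [Measure.pi_pi]
    exact Finset.measurable_prod _ fun i _ =>
      (Measure.measurable_coe (show MeasurableSet (t' i) from ht' i (Set.mem_univ i))).comp
        (measurable_expChannel δ)
  · intro t htm ht
    have h : ∀ x : ℝ, (Measure.pi fun _ : Fin K => expChannel δ (max x 0)) tᶜ
        = 1 - (Measure.pi fun _ : Fin K => expChannel δ (max x 0)) t := by
      intro x
      haveI := hprob x
      rw [prob_compl_eq_one_sub htm]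
    simp_rw [h]
    exact Measurable.const_sub ht _
  · intro f hdisj hfm hf
    simp_rw [measure_iUnion hdisj hfm]
    exact Measurable.ennreal_tsum hf

/-- The `K`-fold product of the (positive-part) channel, as a Markov kernel. -/
noncomputable def piKernel (δ : ℝ) (hδ : 0 ≤ δ) (K : ℕ) :
    ProbabilityTheory.Kernel ℝ (Fin K → ℝ) :=
  ⟨fun x => Measure.pi fun _ : Fin K => expChannel δ (max x 0),
    measurable_pi_expChannel δ hδ K⟩

instance piKernel.instIsMarkovKernel (δ : ℝ) (hδ : 0 ≤ δ) (K : ℕ) :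
    ProbabilityTheory.IsMarkovKernel (piKernel δ hδ K) := by
  constructor
  intro x
  haveI : IsProbabilityMeasure (expChannel δ (max x 0)) :=
    ⟨expChannel_univ δ _ hδ (le_max_right _ _)⟩
  show IsProbabilityMeasure (Measure.pi _)
  infer_instance

lemma measurable_jointKernel (δ : ℝ) (hδ : 0 ≤ δ) (K : ℕ) :
    Measurable fun x : ℝ =>
      (Measure.pi fun _ : Fin K => expChannel δ (max x 0)).map fun ys => (x, ys) := by
  apply Measure.measurable_of_measurable_coe
  intro s hs
  have h : ∀ x : ℝ, ((Measure.pi fun _ : Fin K => expChannel δ (max x 0)).map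
      fun ys => (x, ys)) s = (piKernel δ hδ K) x (Prod.mk x ⁻¹' s) := by
    intro x
    rw [Measure.map_apply measurable_prodMk_left hs]
    rfl
  simp_rw [h]
  exact ProbabilityTheory.Kernel.measurable_kernel_prodMk_left hs

lemma expMeasure_ae_nonneg (r : ℝ) : ∀ᵐ x ∂(expMeasure r), 0 ≤ x := by
  rw [ae_iff]
  have h : {x : ℝ | ¬ 0 ≤ x} = Set.Iio 0 := by ext x; simp [not_le]
  rw [h, expMeasure, withDensity_apply _ measurableSet_Iio]
  rw [setLIntegral_congr_fun measurableSet_Iio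
    (fun x (hx : x ∈ Set.Iio 0) => if_neg (not_le.2 hx))]
  simp

lemma jointLaw_eq (lam δ : ℝ) (K : ℕ) :
    jointLaw lam δ K = (expMeasure lam).bind fun x =>
      (Measure.pi fun _ : Fin K => expChannel δ (max x 0)).map fun ys => (x, ys) := by
  rw [jointLaw]
  unfold Measure.bind
  congr 1
  apply Measure.map_congr
  filter_upwards [expMeasure_ae_nonneg lam] with x hx
  rw [max_eq_left hx]

lemma measurable_sup {K : ℕ} (hne : (Finset.univ : Finset (Fin K)).Nonempty) :
    Measurable fun ys : Fin K → ℝ => Finset.univ.sup' hne ys := by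
  have h := Finset.measurable_sup' hne (f := fun (i : Fin K) (ys : Fin K → ℝ) => ys i)
    (fun i _ => measurable_pi_apply i)
  have heq : (fun ys : Fin K → ℝ => Finset.univ.sup' hne ys)
      = Finset.univ.sup' hne fun i ys => ys i := by
    funext ys
    rw [Finset.sup'_apply]
  rw [heq]
  exact h

lemma pi_compl_Icc_null (δ : ℝ) (hδ : 0 < δ) (K : ℕ) {x : ℝ} (hx : 0 ≤ x) :
    (Measure.pi fun _ : Fin K => expChannel δ x)
      (Set.pi Set.univ fun _ : Fin K => Set.Icc 0 x)ᶜ = 0 := by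
  haveI : IsProbabilityMeasure (expChannel δ x) := ⟨expChannel_univ δ x hδ.le hx⟩
  haveI : IsProbabilityMeasure (Measure.pi fun _ : Fin K => expChannel δ x) := by infer_instance
  rw [prob_compl_eq_zero_iff (MeasurableSet.univ_pi fun _ => measurableSet_Icc),
    Measure.pi_pi]
  simp [expChannel_Icc δ x hδ.le hx]

lemma integral_exp_Ioo (c x : ℝ) (hc : c ≠ 0) (hx : 0 ≤ x) :
    ∫ t in Set.Ioo 0 x, Real.exp (-c * t) = (1 - Real.exp (-c * x)) / c := by
  rw [Measure.restrict_congr_set Ioo_ae_eq_Ioc, ← intervalIntegral.integral_of_le hx]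
  have h : ∀ t ∈ Set.uIcc 0 x, HasDerivAt (fun t => -(1/c) * Real.exp (-c * t))
      (Real.exp (-c * t)) t := by
    intro t _
    have h1 : HasDerivAt (fun t : ℝ => -c * t) (-c) t := by
      simpa using (hasDerivAt_id t).const_mul (-c)
    have h2 := (h1.exp).const_mul (-(1/c))
    exact h2.congr_deriv (by field_simp)
  rw [intervalIntegral.integral_eq_sub_of_hasDerivAt h
    ((by fun_prop : Continuous fun t : ℝ => Real.exp (-c * t)).intervalIntegrable 0 x)]
  field_simp
  simp only [mul_zero, neg_zero, Real.exp_zero]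
  ring

lemma inner_eval (δ : ℝ) (hδ : 0 < δ) {K : ℕ}
    (hne : (Finset.univ : Finset (Fin K)).Nonempty) {x : ℝ} (hx : 0 ≤ x) :
    ∫⁻ ys : Fin K → ℝ, ENNReal.ofReal (x - Finset.univ.sup' hne ys)
        ∂(Measure.pi fun _ : Fin K => expChannel δ x)
      = ENNReal.ofReal ((1 - Real.exp (-(K * δ) * x)) / (K * δ)) := by
  have hK0 : K ≠ 0 := by
    rcases hne with ⟨i, _⟩
    have := i.isLt
    omega
  haveI : IsProbabilityMeasure (expChannel δ x) := ⟨expChannel_univ δ x hδ.le hx⟩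
  set pp : Measure (Fin K → ℝ) := Measure.pi fun _ : Fin K => expChannel δ x with hpp
  have hGc : pp (Set.pi Set.univ fun _ : Fin K => Set.Icc 0 x)ᶜ = 0 :=
    pi_compl_Icc_null δ hδ K hx
  have hae : ∀ᵐ ys ∂pp, 0 ≤ x - Finset.univ.sup' hne ys := by
    have h := MeasureTheory.measure_eq_zero_iff_ae_notMem.mp hGc
    filter_upwards [h] with ys hys
    have hmem : ys ∈ Set.pi Set.univ fun _ : Fin K => Set.Icc 0 x := not_not.1 hys
    have h2 : Finset.univ.sup' hne ys ≤ x :=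
      Finset.sup'_le hne ys fun i _ => (hmem i (Set.mem_univ i)).2
    linarith
  rw [lintegral_eq_lintegral_meas_lt pp hae
    ((measurable_const.sub (measurable_sup hne)).aemeasurable)]
  have hset : ∀ t : ℝ, {ys : Fin K → ℝ | t < x - Finset.univ.sup' hne ys}
      = Set.pi Set.univ fun _ : Fin K => Set.Iio (x - t) := by
    intro t
    ext ys
    simp only [Set.mem_setOf_eq, Set.mem_pi, Set.mem_univ, forall_true_left, Set.mem_Iio]
    rw [lt_sub_comm, Finset.sup'_lt_iff]
    simp
  have hval : ∀ t ∈ Set.Ioi (0:ℝ), pp {ys : Fin K → ℝ | t < x - Finset.univ.sup' hne ys}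
      = (Set.Ioo 0 x).indicator (fun t => ENNReal.ofReal (Real.exp (-(K * δ) * t))) t := by
    intro t ht
    have ht' : 0 < t := ht
    rw [hset t, hpp, Measure.pi_pi, Finset.prod_const, Finset.card_univ, Fintype.card_fin]
    by_cases hlt : t < x
    · rw [expChannel_Iio δ x (x - t) hδ.le (by linarith) (by linarith),
        Set.indicator_of_mem (Set.mem_Ioo.mpr ⟨ht', hlt⟩),
        ← ENNReal.ofReal_pow (Real.exp_nonneg _), ← Real.exp_nat_mul]
      congr 1
      ring
    · rw [expChannel_Iio_nonpos δ x _ (by linarith), zero_pow hK0,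
        Set.indicator_of_notMem (by simp [not_lt.2 (not_lt.1 hlt)])]
  rw [setLIntegral_congr_fun measurableSet_Ioi hval,
    lintegral_indicator measurableSet_Ioo, Measure.restrict_restrict measurableSet_Ioo]
  have hinter : Set.Ioo (0:ℝ) x ∩ Set.Ioi 0 = Set.Ioo 0 x := by
    ext t
    simp only [Set.mem_inter_iff, Set.mem_Ioo, Set.mem_Ioi, and_iff_left_iff_imp]
    exact fun h => h.1
  rw [hinter]
  rw [← ofReal_integral_eq_lintegral_ofReal
    (((by fun_prop : Continuous fun t : ℝ =>
        Real.exp (-(K * δ) * t)).continuousOn.integrableOn_compact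
      isCompact_Icc).mono_set Set.Ioo_subset_Icc_self)
    (Filter.Eventually.of_forall fun t => Real.exp_nonneg _)]
  rw [integral_exp_Ioo _ x (by positivity) hx]

lemma int_Ioi_exp (b : ℝ) (hb : 0 < b) : ∫ x in Set.Ioi (0:ℝ), Real.exp (-b * x) = 1 / b := by
  have h := integral_comp_mul_left_Ioi (fun u => Real.exp (-u)) 0 hb
  rw [mul_zero, integral_exp_neg_Ioi_zero, smul_eq_mul, mul_one] at h
  simpa [neg_mul, one_div] using h

lemma outer_eval (lam c : ℝ) (hlam : 0 < lam) (hc : 0 < c) :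
    ∫⁻ x, ENNReal.ofReal ((1 - Real.exp (-c * x)) / c) ∂(expMeasure lam)
      = ENNReal.ofReal (1 / (lam + c)) := by
  rw [expMeasure, lintegral_withDensity_eq_lintegral_mul _
    (by
      refine Measurable.ite ?_ (by fun_prop) measurable_const
      exact measurableSet_le measurable_const measurable_id :
      Measurable fun x : ℝ => if 0 ≤ x then ENNReal.ofReal (lam * Real.exp (-lam * x)) else 0)
    (by fun_prop : Measurable fun x : ℝ => ENNReal.ofReal ((1 - Real.exp (-c * x)) / c))]
  have heq : (fun x : ℝ => (if 0 ≤ x then ENNReal.ofReal (lam * Real.exp (-lam * x)) else 0)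
        * ENNReal.ofReal ((1 - Real.exp (-c * x)) / c))
      = (Set.Ici (0:ℝ)).indicator fun x =>
          ENNReal.ofReal (lam * Real.exp (-lam * x) * ((1 - Real.exp (-c * x)) / c)) := by
    funext x
    by_cases hx : 0 ≤ x
    · rw [if_pos hx, Set.indicator_of_mem (Set.mem_Ici.mpr hx),
        ← ENNReal.ofReal_mul (by positivity)]
    · rw [if_neg hx, Set.indicator_of_notMem (fun h => hx (Set.mem_Ici.mp h)), zero_mul]
  show (∫⁻ x, ((fun x : ℝ => if 0 ≤ x then ENNReal.ofReal (lam * Real.exp (-lam * x)) else 0) *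
      fun x : ℝ => ENNReal.ofReal ((1 - Real.exp (-c * x)) / c)) x) = _
  simp only [Pi.mul_apply]
  rw [show (fun x : ℝ => (if 0 ≤ x then ENNReal.ofReal (lam * Real.exp (-lam * x)) else 0)
        * ENNReal.ofReal ((1 - Real.exp (-c * x)) / c)) = _ from heq]
  rw [lintegral_indicator measurableSet_Ici, ← MeasureTheory.restrict_Ioi_eq_restrict_Ici]
  have hgeq : ∀ x : ℝ, lam * Real.exp (-lam * x) * ((1 - Real.exp (-c * x)) / c)
      = (lam / c) * Real.exp (-lam * x) - (lam / c) * Real.exp (-(lam + c) * x) := by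
    intro x
    rw [show -(lam + c) * x = -lam * x + -c * x by ring, Real.exp_add]
    field_simp
  simp_rw [hgeq]
  have hint1 : IntegrableOn (fun x : ℝ => (lam / c) * Real.exp (-lam * x)) (Set.Ioi 0) :=
    (exp_neg_integrableOn_Ioi 0 hlam).const_mul _
  have hint2 : IntegrableOn (fun x : ℝ => (lam / c) * Real.exp (-(lam + c) * x)) (Set.Ioi 0) :=
    (exp_neg_integrableOn_Ioi 0 (by positivity)).const_mul _
  rw [show (fun a : ℝ => ENNReal.ofReal
        ((lam / c) * Real.exp (-lam * a) - (lam / c) * Real.exp (-(lam + c) * a)))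
      = fun a : ℝ => ENNReal.ofReal (((fun x : ℝ => (lam / c) * Real.exp (-lam * x))
        - fun x : ℝ => (lam / c) * Real.exp (-(lam + c) * x)) a) from rfl,
    ← ofReal_integral_eq_lintegral_ofReal (hint1.sub hint2)]
  · rw [show ((fun x : ℝ => (lam / c) * Real.exp (-lam * x))
          - fun x : ℝ => (lam / c) * Real.exp (-(lam + c) * x))
        = fun x : ℝ => (lam / c) * Real.exp (-lam * x)
          - (lam / c) * Real.exp (-(lam + c) * x) from rfl,
      integral_sub hint1 hint2, integral_const_mul, integral_const_mul,
      int_Ioi_exp lam hlam, int_Ioi_exp (lam + c) (by positivity)]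
    congr 1
    field_simp
    ring
  · rw [Filter.EventuallyLE, ae_restrict_iff' measurableSet_Ioi]
    refine Filter.Eventually.of_forall fun x hx => ?_
    have h1 : Real.exp (-(lam + c) * x) ≤ Real.exp (-lam * x) := by
      apply Real.exp_le_exp.2
      have h0 : 0 < x := hx
      nlinarith
    have h2 := mul_le_mul_of_nonneg_left h1 (div_pos hlam hc).le
    simp only [Pi.zero_apply, Pi.sub_apply]
    linarith

end Aux

/-- under the joint law of `(X, Y₁, …, Y_K)`, the expected one-sided distortion of
the select-max estimator `Ŷ = max{Y₁,…,Y_K}` equals `E[X − Ŷ] = D / (K − (K−1)·λ·D)`. -/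
theorem selectMax_expected_distortion (lam D : ℝ) (hlam : 0 < lam) (hD : 0 < D)
    (hD' : D < 1 / lam) (K : ℕ) (hK : 1 ≤ K) :
    ∫ p, (p.1 - ⨆ i, p.2 i) ∂(jointLaw lam (1 / D - lam) K)
      = D / (K - (K - 1) * lam * D) := by
  have hlD : lam * D < 1 := by
    have h := mul_lt_mul_of_pos_left hD' hlam
    rwa [mul_one_div_cancel hlam.ne'] at h
  set δ : ℝ := 1 / D - lam with hδdef
  have hδ : 0 < δ := by
    rw [hδdef, sub_pos, lt_div_iff₀ hD]
    linarith [mul_comm lam D]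
  haveI : Nonempty (Fin K) := Fin.pos_iff_nonempty.mp (by omega)
  have hne : (Finset.univ : Finset (Fin K)).Nonempty := Finset.univ_nonempty
  have hKpos : (0:ℝ) < K := by exact_mod_cast (by omega : 0 < K)
  set c : ℝ := K * δ with hcdef
  have hc : 0 < c := mul_pos hKpos hδ
  have hsup : (fun p : ℝ × (Fin K → ℝ) => p.1 - ⨆ i, p.2 i)
      = fun p => p.1 - Finset.univ.sup' hne p.2 := by
    funext p
    rw [Finset.sup'_univ_eq_ciSup]
  rw [show (∫ p, (p.1 - ⨆ i, p.2 i) ∂(jointLaw lam δ K))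
      = ∫ p, (p.1 - Finset.univ.sup' hne p.2) ∂(jointLaw lam δ K) from by rw [hsup]]
  rw [jointLaw_eq lam δ K]
  set μ := expMeasure lam with hμdef
  set m := fun x : ℝ =>
    (Measure.pi fun _ : Fin K => expChannel δ (max x 0)).map fun ys => (x, ys) with hmdef
  have hmm : Measurable m := measurable_jointKernel δ hδ.le K
  have hfm : Measurable fun p : ℝ × (Fin K → ℝ) => p.1 - Finset.univ.sup' hne p.2 :=
    measurable_fst.sub ((measurable_sup hne).comp measurable_snd)
  have hS : MeasurableSet {p : ℝ × (Fin K → ℝ) | p.1 - Finset.univ.sup' hne p.2 < 0} :=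
    measurableSet_lt hfm measurable_const
  have hae : 0 ≤ᵐ[μ.bind m] fun p : ℝ × (Fin K → ℝ) => p.1 - Finset.univ.sup' hne p.2 := by
    rw [Filter.EventuallyLE, ae_iff]
    have hset : {p : ℝ × (Fin K → ℝ) |
        ¬ (0:ℝ) ≤ p.1 - Finset.univ.sup' hne p.2}
        = {p : ℝ × (Fin K → ℝ) | p.1 - Finset.univ.sup' hne p.2 < 0} := by
      ext p; simp [not_le]
    simp only [Pi.zero_apply]
    rw [hset, Measure.bind_apply hS hmm.aemeasurable]
    have hz : ∀ᵐ x ∂μ, m x {p : ℝ × (Fin K → ℝ) | p.1 - Finset.univ.sup' hne p.2 < 0} = 0 := by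
      filter_upwards [expMeasure_ae_nonneg lam] with x hx
      rw [hmdef]
      rw [Measure.map_apply measurable_prodMk_left hS, max_eq_left hx]
      refine measure_mono_null ?_ (pi_compl_Icc_null δ hδ K hx)
      intro ys hys
      simp only [Set.mem_preimage, Set.mem_setOf_eq] at hys
      intro hmem
      have h2 : Finset.univ.sup' hne ys ≤ x :=
        Finset.sup'_le hne ys fun i _ => (hmem i (Set.mem_univ i)).2
      linarith
    rw [lintegral_congr_ae hz, lintegral_zero]
  rw [integral_eq_lintegral_of_nonneg_ae hae hfm.aestronglyMeasurable]
  rw [Measure.lintegral_bind hmm.aemeasurable (show Measurable fun p : ℝ × (Fin K → ℝ) =>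
    ENNReal.ofReal (p.1 - Finset.univ.sup' hne p.2) from ENNReal.measurable_ofReal.comp hfm).aemeasurable]
  have hstep : ∫⁻ x, (∫⁻ p, ENNReal.ofReal (p.1 - Finset.univ.sup' hne p.2) ∂(m x)) ∂μ
      = ∫⁻ x, ENNReal.ofReal ((1 - Real.exp (-c * x)) / c) ∂μ := by
    apply lintegral_congr_ae
    filter_upwards [expMeasure_ae_nonneg lam] with x hx
    rw [hmdef]
    rw [lintegral_map (show Measurable fun p : ℝ × (Fin K → ℝ) =>
        ENNReal.ofReal (p.1 - Finset.univ.sup' hne p.2) from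
        ENNReal.measurable_ofReal.comp hfm) measurable_prodMk_left,
      max_eq_left hx]
    exact inner_eval δ hδ hne hx
  rw [hstep, outer_eval lam c hlam hc, ENNReal.toReal_ofReal (by positivity)]
  have hden : (K:ℝ) - ((K:ℝ) - 1) * lam * D = D * (lam + c) := by
    rw [hcdef, hδdef]
    field_simp
    ring
  rw [hden, eq_div_iff (by positivity)]
  field_simp
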